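/- Let f : {1,2,3,...} → ℝ be a function such that lim_{n→∞} f(n)/n = h for a real number h. Then for every n ≥ 1 the series Σ_{k=0}^{∞} [2f(2^k n) − f(2^{k+1} n)]/2^{k+1} converges and its sum equals f(n) − h·n. -/

import Mathlib

/-- If `f` is a function on the positive integers with `lim f(n)/n = h`, then
for every `n ≥ 1` the series `Σ_{k=0}^{∞} [2f(2^k n) − f(2^{k+1} n)]/2^{k+1}`
converges and its sum equals `f(n) − h·n`. -/
theorem excess_series_sum (f : ℕ → ℝ) (h : ℝ)
    (hf : Filter.Tendsto (fun n : ℕ => f n / n) Filter.atTop (nhds h))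
    (n : ℕ) (hn : 1 ≤ n) :
    Filter.Tendsto
      (fun m : ℕ => ∑ k ∈ Finset.range m,
        (2 * f (2 ^ k * n) - f (2 ^ (k + 1) * n)) / 2 ^ (k + 1))
      Filter.atTop (nhds (f n - h * n)) := by
  set g : ℕ → ℝ := fun k => f (2 ^ k * n) / 2 ^ k with hg
  have hsum : ∀ m : ℕ, (∑ k ∈ Finset.range m,
      (2 * f (2 ^ k * n) - f (2 ^ (k + 1) * n)) / 2 ^ (k + 1)) = g 0 - g m := by
    intro m
    rw [← Finset.sum_range_sub' g m]
    refine Finset.sum_congr rfl fun k _ => ?_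
    simp only [hg]
    rw [pow_succ]
    field_simp
    ring
  have hnR : (0:ℝ) < n := by exact_mod_cast hn
  have hsub : Filter.Tendsto (fun m : ℕ => 2 ^ m * n) Filter.atTop Filter.atTop := by
    apply Filter.Tendsto.atTop_mul_const' (Nat.lt_of_lt_of_le Nat.zero_lt_one hn)
    exact tendsto_pow_atTop_atTop_of_one_lt one_lt_two
  have h1 : Filter.Tendsto (fun m : ℕ => f (2 ^ m * n) / (2 ^ m * n)) Filter.atTop (nhds h) :=
    (hf.comp hsub).congr fun m => by simp [Function.comp]
  have h2 : Filter.Tendsto (fun m : ℕ => g m) Filter.atTop (nhds (h * n)) := by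
    have := h1.mul_const (n : ℝ)
    refine this.congr fun m => ?_
    simp only [hg]
    rw [div_mul_eq_mul_div, mul_comm ((2:ℝ)^m) (n:ℝ), ← div_div, mul_div_assoc,
      div_self (ne_of_gt hnR), mul_one]
  have h3 : Filter.Tendsto (fun m : ℕ => g 0 - g m) Filter.atTop (nhds (f n - h * n)) := by
    have hg0 : g 0 = f n := by simp [hg]
    rw [← hg0]
    exact tendsto_const_nhds.sub h2
  exact h3.congr fun m => (hsum m).symm
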